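/- Let H be a complex Hilbert space and let V ⊆ B(H) be a linear subspace. Then the set E(V) of minimal V-projections on B(H) is nonempty, and F(V) = {T ∈ B(H) : E(T) = T for every E ∈ E(V)} = ⋂_{E ∈ E(V)} range(E). -/

import Mathlib

set_option linter.unusedSectionVars false
set_option maxHeartbeats 1000000
set_option synthInstance.maxHeartbeats 400000

open Filter Topology ComplexConjugate

variable {H : Type*} [NormedAddCommGroup H] [InnerProductSpace ℂ H] [CompleteSpace H]

/-- The bounded operator on the Hilbert space `H ⊕ ⋯ ⊕ H` (with its ℓ²-norm)
induced by an `n × n` matrix of bounded operators on `H`. -/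
noncomputable def matOp {H : Type*} [NormedAddCommGroup H] [InnerProductSpace ℂ H]
    {n : ℕ} (A : Matrix (Fin n) (Fin n) (H →L[ℂ] H)) :
    PiLp 2 (fun _ : Fin n => H) →L[ℂ] PiLp 2 (fun _ : Fin n => H) :=
  ((PiLp.continuousLinearEquiv 2 ℂ (fun _ : Fin n => H)).symm.toContinuousLinearMap.comp
      (ContinuousLinearMap.pi fun i => ∑ j, (A i j).comp (ContinuousLinearMap.proj j))).comp
    (PiLp.continuousLinearEquiv 2 ℂ (fun _ : Fin n => H)).toContinuousLinearMap

/-- A linear map on `B(H)` is completely contractive if all of its matrix amplifications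
are contractive with respect to the C*-norms on `Mₙ(B(H)) ≅ B(H ⊕ ⋯ ⊕ H)`. -/
def FullCC {H : Type*} [NormedAddCommGroup H] [InnerProductSpace ℂ H]
    (φ : (H →L[ℂ] H) →ₗ[ℂ] (H →L[ℂ] H)) : Prop :=
  ∀ (n : ℕ) (A : Matrix (Fin n) (Fin n) (H →L[ℂ] H)), ‖matOp (A.map φ)‖ ≤ ‖matOp A‖

/-- An `S`-map: a completely contractive linear map of `B(H)` fixing `S` pointwise. -/
def IsSMap {H : Type*} [NormedAddCommGroup H] [InnerProductSpace ℂ H]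
    (S : Set (H →L[ℂ] H)) (φ : (H →L[ℂ] H) →ₗ[ℂ] (H →L[ℂ] H)) : Prop :=
  FullCC φ ∧ ∀ s ∈ S, φ s = s

/-- A minimal `S`-projection: an idempotent `S`-map whose seminorm `T ↦ ‖E T‖`
is minimal among the seminorms of all `S`-maps. -/
def IsMinimalSProj {H : Type*} [NormedAddCommGroup H] [InnerProductSpace ℂ H]
    (S : Set (H →L[ℂ] H)) (E : (H →L[ℂ] H) →ₗ[ℂ] (H →L[ℂ] H)) : Prop :=
  IsSMap S E ∧ E ∘ₗ E = E ∧
    ∀ ψ : (H →L[ℂ] H) →ₗ[ℂ] (H →L[ℂ] H), IsSMap S ψ →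
      (∀ T, ‖ψ T‖ ≤ ‖E T‖) → ∀ T, ‖ψ T‖ = ‖E T‖

/-! ### Basic lemmas about `matOp` and `FullCC` -/

section Aux

lemma matOp_apply {n : ℕ} (A : Matrix (Fin n) (Fin n) (H →L[ℂ] H))
    (x : PiLp 2 (fun _ : Fin n => H)) (i : Fin n) :
    matOp A x i = ∑ j, A i j (x j) := by
  simp [matOp, ContinuousLinearMap.sum_apply]

lemma inner_matOp {n : ℕ} (A : Matrix (Fin n) (Fin n) (H →L[ℂ] H))
    (x y : PiLp 2 (fun _ : Fin n => H)) :
    (inner ℂ (matOp A x) y : ℂ) = ∑ i, ∑ j, (inner ℂ (A i j (x j)) (y i) : ℂ) := by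
  rw [PiLp.inner_apply]
  refine Finset.sum_congr rfl fun i _ => ?_
  rw [matOp_apply, sum_inner]

lemma matOp_add {n : ℕ} (A B : Matrix (Fin n) (Fin n) (H →L[ℂ] H)) :
    matOp (A + B) = matOp A + matOp B := by
  ext x i
  simp [matOp_apply, Matrix.add_apply, Finset.sum_add_distrib]

lemma matOp_smul {n : ℕ} (c : ℂ) (A : Matrix (Fin n) (Fin n) (H →L[ℂ] H)) :
    matOp (c • A) = c • matOp A := by
  ext x i
  simp [matOp_apply, Matrix.smul_apply, Finset.smul_sum]

lemma matOp_sum {n : ℕ} {κ : Type*} (s : Finset κ)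
    (B : κ → Matrix (Fin n) (Fin n) (H →L[ℂ] H)) :
    matOp (∑ k ∈ s, B k) = ∑ k ∈ s, matOp (B k) := by
  induction s using Finset.cons_induction with
  | empty => ext x i; simp [matOp_apply]
  | cons a s ha ih => rw [Finset.sum_cons, Finset.sum_cons, matOp_add, ih]

lemma pi1_norm (x : PiLp 2 (fun _ : Fin 1 => H)) : ‖x‖ = ‖x 0‖ := by
  rw [PiLp.norm_eq_sum (by norm_num : (0:ℝ) < (2 : ENNReal).toReal)]
  simp [Finset.sum_fin_eq_sum_range]
  rw [← Real.rpow_natCast ‖x 0‖ 2, ← Real.rpow_mul (norm_nonneg _)]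
  norm_num

lemma norm_matOp_one (T : H →L[ℂ] H) :
    ‖matOp (Matrix.of fun _ _ : Fin 1 => T)‖ = ‖T‖ := by
  apply le_antisymm
  · apply ContinuousLinearMap.opNorm_le_bound _ (norm_nonneg T)
    intro x
    rw [pi1_norm, pi1_norm x, matOp_apply]
    simpa using T.le_opNorm (x 0)
  · refine ContinuousLinearMap.opNorm_le_bound T
      (norm_nonneg (matOp (Matrix.of fun _ _ : Fin 1 => T))) fun v => ?_
    have hv : ‖matOp (Matrix.of fun _ _ : Fin 1 => T) ((WithLp.equiv 2 _).symm fun _ => v)‖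
        = ‖T v‖ := by
      rw [pi1_norm, matOp_apply]; simp
    calc ‖T v‖ = _ := hv.symm
      _ ≤ ‖matOp (Matrix.of fun _ _ : Fin 1 => T)‖ * ‖(WithLp.equiv 2 _).symm fun _ => v‖ :=
          ContinuousLinearMap.le_opNorm _ _
      _ = _ := by rw [pi1_norm]; rfl

lemma FullCC.norm_le {φ : (H →L[ℂ] H) →ₗ[ℂ] (H →L[ℂ] H)} (hφ : FullCC φ)
    (T : H →L[ℂ] H) : ‖φ T‖ ≤ ‖T‖ := by
  have h := hφ 1 (Matrix.of fun _ _ => T)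
  have he : (Matrix.of fun _ _ : Fin 1 => T).map φ = Matrix.of fun _ _ : Fin 1 => φ T := by
    ext i j; rfl
  rw [he, norm_matOp_one, norm_matOp_one] at h
  exact h

lemma FullCC.id : FullCC (LinearMap.id : (H →L[ℂ] H) →ₗ[ℂ] (H →L[ℂ] H)) := by
  intro n A
  have h : A.map (LinearMap.id : (H →L[ℂ] H) →ₗ[ℂ] (H →L[ℂ] H)) = A := by
    ext i j; rfl
  rw [h]

lemma FullCC.comp {φ ψ : (H →L[ℂ] H) →ₗ[ℂ] (H →L[ℂ] H)} (hφ : FullCC φ) (hψ : FullCC ψ) :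
    FullCC (φ ∘ₗ ψ) := by
  intro n A
  have h : A.map (φ ∘ₗ ψ) = (A.map ψ).map φ := by ext i j; rfl
  rw [h]
  exact (hφ n (A.map ψ)).trans (hψ n A)

lemma IsSMap.id' {S : Set (H →L[ℂ] H)} :
    IsSMap S (LinearMap.id : (H →L[ℂ] H) →ₗ[ℂ] (H →L[ℂ] H)) :=
  ⟨FullCC.id, fun _ _ => rfl⟩

lemma IsSMap.comp {S : Set (H →L[ℂ] H)} {φ ψ : (H →L[ℂ] H) →ₗ[ℂ] (H →L[ℂ] H)}
    (hφ : IsSMap S φ) (hψ : IsSMap S ψ) : IsSMap S (φ ∘ₗ ψ) :=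
  ⟨hφ.1.comp hψ.1, fun s hs => by
    simp only [LinearMap.comp_apply, hψ.2 s hs, hφ.2 s hs]⟩

lemma opNorm_le_of_inner {E : Type*} [NormedAddCommGroup E] [InnerProductSpace ℂ E]
    (L : E →L[ℂ] E) {M : ℝ} (hM : 0 ≤ M)
    (h : ∀ x y : E, ‖(inner ℂ (L x) y : ℂ)‖ ≤ M * ‖x‖ * ‖y‖) : ‖L‖ ≤ M := by
  apply ContinuousLinearMap.opNorm_le_bound _ hM
  intro x
  rcases eq_or_lt_of_le (norm_nonneg (L x)) with h0 | h0
  · rw [← h0]; positivity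
  · have h2 := h x (L x)
    have h3 : ‖(inner ℂ (L x) (L x) : ℂ)‖ = ‖L x‖ ^ 2 := by
      rw [inner_self_eq_norm_sq_to_K]
      rw [norm_pow, RCLike.norm_ofReal, abs_norm]
    rw [h3] at h2
    nlinarith

/-! ### Ultrafilter limits of scalars -/

open scoped Classical in
noncomputable def ulim {ι : Type*} (U : Ultrafilter ι) (g : ι → ℂ) : ℂ :=
  if h : ∃ c, Tendsto g (U : Filter ι) (𝓝 c) then h.choose else 0

lemma ulim_eq {ι : Type*} {U : Ultrafilter ι} {g : ι → ℂ} {c : ℂ}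
    (h : Tendsto g (U : Filter ι) (𝓝 c)) : ulim U g = c := by
  have hex : ∃ c, Tendsto g (U : Filter ι) (𝓝 c) := ⟨c, h⟩
  rw [ulim, dif_pos hex]
  exact tendsto_nhds_unique hex.choose_spec h

lemma tendsto_ulim {ι : Type*} {U : Ultrafilter ι} {g : ι → ℂ} {M : ℝ}
    (hg : ∀ i, ‖g i‖ ≤ M) : Tendsto g (U : Filter ι) (𝓝 (ulim U g)) := by
  have hle : (U : Filter ι).map g ≤ Filter.principal (Metric.closedBall 0 M) := by
    rw [Filter.le_principal_iff]
    exact Filter.mem_map.2 (Filter.Eventually.mono (Filter.Eventually.of_forall hg)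
      (fun i hi => by simpa [Metric.mem_closedBall, dist_eq_norm] using hi))
  obtain ⟨c, _, hc⟩ := (isCompact_closedBall (0:ℂ) M).ultrafilter_le_nhds (U.map g) hle
  have h : Tendsto g (U : Filter ι) (𝓝 c) := hc
  rw [ulim_eq h]; exact h

lemma norm_ulim_le {ι : Type*} {U : Ultrafilter ι} {g : ι → ℂ} {M r : ℝ}
    (hg : ∀ i, ‖g i‖ ≤ M) (hr : ∀ᶠ i in (U : Filter ι), ‖g i‖ ≤ r) : ‖ulim U g‖ ≤ r :=
  le_of_tendsto (tendsto_ulim hg).norm hr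

/-! ### WOT ultrafilter limits of families of maps -/

lemma exists_wotLim {ι : Type*} (U : Ultrafilter ι)
    (Φ : ι → ((H →L[ℂ] H) →ₗ[ℂ] (H →L[ℂ] H)))
    (hc : ∀ i T, ‖Φ i T‖ ≤ ‖T‖) :
    ∃ Ψ : (H →L[ℂ] H) →ₗ[ℂ] (H →L[ℂ] H),
      ∀ T x y, Tendsto (fun i => (inner ℂ ((Φ i T) x) y : ℂ)) (U : Filter ι)
        (𝓝 (inner ℂ ((Ψ T) x) y)) := by
  have bnd : ∀ (T : H →L[ℂ] H) (x y : H) (i : ι),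
      ‖(inner ℂ ((Φ i T) x) y : ℂ)‖ ≤ ‖T‖ * ‖x‖ * ‖y‖ := by
    intro T x y i
    calc ‖(inner ℂ ((Φ i T) x) y : ℂ)‖ ≤ ‖(Φ i T) x‖ * ‖y‖ := norm_inner_le_norm _ _
      _ ≤ (‖T‖ * ‖x‖) * ‖y‖ := by
          have h1 : ‖(Φ i T) x‖ ≤ ‖Φ i T‖ * ‖x‖ := (Φ i T).le_opNorm x
          have h2 : ‖Φ i T‖ * ‖x‖ ≤ ‖T‖ * ‖x‖ :=
            mul_le_mul_of_nonneg_right (hc i T) (norm_nonneg x)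
          nlinarith [norm_nonneg y, h1.trans h2]
  have tend : ∀ (T : H →L[ℂ] H) (x y : H),
      Tendsto (fun i => (inner ℂ ((Φ i T) x) y : ℂ)) (U : Filter ι)
        (𝓝 (ulim U (fun i => (inner ℂ ((Φ i T) x) y : ℂ)))) :=
    fun T x y => tendsto_ulim (bnd T x y)
  have keydef : ∀ (T : H →L[ℂ] H) (x : H), ∃ v : H, ∀ y : H,
      (inner ℂ v y : ℂ) = ulim U (fun i => (inner ℂ ((Φ i T) x) y : ℂ)) := by
    intro T x
    set l : H →ₗ[ℂ] ℂ :=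
      { toFun := fun y => ulim U (fun i => (inner ℂ ((Φ i T) x) y : ℂ))
        map_add' := by
          intro y y'
          refine ulim_eq ?_
          refine Tendsto.congr (fun i => ?_) ((tend T x y).add (tend T x y'))
          rw [← inner_add_right]
        map_smul' := by
          intro a y
          refine ulim_eq ?_
          refine Tendsto.congr (fun i => ?_) ((tend T x y).const_mul a)
          rw [← inner_smul_right] } with hl
    set lc : H →L[ℂ] ℂ := LinearMap.mkContinuous l (‖T‖ * ‖x‖)
      (fun y => norm_ulim_le (bnd T x y) (Filter.Eventually.of_forall (bnd T x y))) with hlc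
    refine ⟨(InnerProductSpace.toDual ℂ H).symm lc, fun y => ?_⟩
    rw [InnerProductSpace.toDual_symm_apply]
    rfl
  choose v hv using keydef
  have hvadd : ∀ T x x', v T (x + x') = v T x + v T x' := by
    intro T x x'
    refine ext_inner_right ℂ (fun y => ?_)
    rw [inner_add_left, hv, hv, hv]
    refine ulim_eq ?_
    refine Tendsto.congr (fun i => ?_) ((tend T x y).add (tend T x' y))
    rw [← inner_add_left, ← map_add]
  have hvsmul : ∀ T (a : ℂ) x, v T (a • x) = a • v T x := by
    intro T a x
    refine ext_inner_right ℂ (fun y => ?_)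
    rw [inner_smul_left, hv, hv]
    refine ulim_eq ?_
    refine Tendsto.congr (fun i => ?_) ((tend T x y).const_mul (starRingEnd ℂ a))
    rw [← inner_smul_left, ← map_smul]
  have hvbound : ∀ T x, ‖v T x‖ ≤ ‖T‖ * ‖x‖ := by
    intro T x
    rcases eq_or_lt_of_le (norm_nonneg (v T x)) with h0 | h0
    · rw [← h0]; positivity
    · have h2 : ‖(inner ℂ (v T x) (v T x) : ℂ)‖ ≤ ‖T‖ * ‖x‖ * ‖v T x‖ := by
        rw [hv]
        exact norm_ulim_le (bnd T x (v T x)) (Filter.Eventually.of_forall (bnd T x (v T x)))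
      have h3 : ‖(inner ℂ (v T x) (v T x) : ℂ)‖ = ‖v T x‖ ^ 2 := by
        rw [inner_self_eq_norm_sq_to_K, norm_pow, RCLike.norm_ofReal, abs_norm]
      rw [h3] at h2
      nlinarith
  set Ψf : (H →L[ℂ] H) → (H →L[ℂ] H) := fun T => LinearMap.mkContinuous
    { toFun := v T, map_add' := hvadd T, map_smul' := hvsmul T } ‖T‖ (hvbound T) with hΨf
  have hΨfapp : ∀ T x, Ψf T x = v T x := fun T x => rfl
  refine ⟨{ toFun := Ψf, map_add' := ?_, map_smul' := ?_ }, ?_⟩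
  · intro T T'
    ext x
    refine ext_inner_right ℂ (fun y => ?_)
    rw [ContinuousLinearMap.add_apply, inner_add_left]
    rw [hΨfapp, hΨfapp, hΨfapp, hv, hv, hv]
    refine ulim_eq ?_
    refine Tendsto.congr (fun i => ?_) ((tend T x y).add (tend T' x y))
    rw [← inner_add_left, ← ContinuousLinearMap.add_apply, ← map_add]
  · intro c T
    ext x
    refine ext_inner_right ℂ (fun y => ?_)
    rw [RingHom.id_apply, ContinuousLinearMap.smul_apply, inner_smul_left]
    rw [hΨfapp, hΨfapp, hv, hv]
    refine ulim_eq ?_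
    refine Tendsto.congr (fun i => ?_) ((tend T x y).const_mul (starRingEnd ℂ c))
    rw [← inner_smul_left, ← ContinuousLinearMap.smul_apply, ← map_smul]
  · intro T x y
    have hval : (inner ℂ (Ψf T x) y : ℂ) = ulim U (fun i => (inner ℂ ((Φ i T) x) y : ℂ)) := by
      rw [hΨfapp, hv]
    rw [LinearMap.coe_mk, AddHom.coe_mk, hval]
    exact tend T x y

section wotprops

variable {ι : Type*} {U : Ultrafilter ι} {Φ : ι → ((H →L[ℂ] H) →ₗ[ℂ] (H →L[ℂ] H))}
  {Ψ : (H →L[ℂ] H) →ₗ[ℂ] (H →L[ℂ] H)}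
  (hΨ : ∀ T x y, Tendsto (fun i => (inner ℂ ((Φ i T) x) y : ℂ)) (U : Filter ι)
        (𝓝 (inner ℂ ((Ψ T) x) y)))

include hΨ

lemma wot_norm_le {T : H →L[ℂ] H} {r : ℝ} (hr : 0 ≤ r)
    (h : ∀ᶠ i in (U : Filter ι), ‖Φ i T‖ ≤ r) : ‖Ψ T‖ ≤ r := by
  refine ContinuousLinearMap.opNorm_le_bound _ hr (fun x => ?_)
  rcases eq_or_lt_of_le (norm_nonneg ((Ψ T) x)) with h0 | h0
  · rw [← h0]; positivity
  · have hub : ‖(inner ℂ ((Ψ T) x) ((Ψ T) x) : ℂ)‖ ≤ (r * ‖x‖) * ‖(Ψ T) x‖ := by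
      refine le_of_tendsto (hΨ T x ((Ψ T) x)).norm (h.mono fun i hi => ?_)
      calc ‖(inner ℂ ((Φ i T) x) ((Ψ T) x) : ℂ)‖ ≤ ‖(Φ i T) x‖ * ‖(Ψ T) x‖ :=
            norm_inner_le_norm _ _
        _ ≤ (r * ‖x‖) * ‖(Ψ T) x‖ := by
            have h2 : ‖(Φ i T) x‖ ≤ r * ‖x‖ :=
              ((Φ i T).le_opNorm x).trans (mul_le_mul_of_nonneg_right hi (norm_nonneg x))
            exact mul_le_mul_of_nonneg_right h2 (norm_nonneg _)
    have h3 : ‖(inner ℂ ((Ψ T) x) ((Ψ T) x) : ℂ)‖ = ‖(Ψ T) x‖ ^ 2 := by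
      rw [inner_self_eq_norm_sq_to_K, norm_pow, RCLike.norm_ofReal, abs_norm]
    rw [h3] at hub
    nlinarith

lemma wot_apply_eq {T S : H →L[ℂ] H} (h : ∀ i, Φ i T = S) : Ψ T = S := by
  ext x
  refine ext_inner_right ℂ fun y => ?_
  refine tendsto_nhds_unique (hΨ T x y) ?_
  have he : (fun i => (inner ℂ ((Φ i T) x) y : ℂ)) = fun _ => (inner ℂ (S x) y : ℂ) :=
    funext fun i => by rw [h i]
  rw [he]
  exact tendsto_const_nhds

lemma wot_congr {T T' : H →L[ℂ] H} (h : ∀ i, Φ i T = Φ i T') : Ψ T = Ψ T' := by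
  ext x
  refine ext_inner_right ℂ fun y => ?_
  refine tendsto_nhds_unique (hΨ T x y) ?_
  refine Tendsto.congr (fun i => ?_) (hΨ T' x y)
  rw [h i]

lemma wot_zero {T : H →L[ℂ] H}
    (h : Tendsto (fun i => ‖Φ i T‖) (U : Filter ι) (𝓝 0)) : Ψ T = 0 := by
  ext x
  refine ext_inner_right ℂ fun y => ?_
  rw [ContinuousLinearMap.zero_apply, inner_zero_left]
  refine tendsto_nhds_unique (hΨ T x y) ?_
  refine squeeze_zero_norm (fun i => ?_) (by simpa using h.mul_const (‖x‖ * ‖y‖))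
  calc ‖(inner ℂ ((Φ i T) x) y : ℂ)‖ ≤ ‖(Φ i T) x‖ * ‖y‖ := norm_inner_le_norm _ _
    _ ≤ (‖Φ i T‖ * ‖x‖) * ‖y‖ :=
        mul_le_mul_of_nonneg_right ((Φ i T).le_opNorm x) (norm_nonneg y)
    _ = ‖Φ i T‖ * (‖x‖ * ‖y‖) := by ring

lemma wot_fullCC (h : ∀ i, FullCC (Φ i)) : FullCC Ψ := by
  intro n A
  refine opNorm_le_of_inner _ (norm_nonneg (matOp A)) (fun ξ η => ?_)
  have hten : Tendsto (fun k => (inner ℂ (matOp (A.map (Φ k)) ξ) η : ℂ)) (U : Filter ι)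
      (𝓝 (inner ℂ (matOp (A.map Ψ) ξ) η)) := by
    simp only [inner_matOp, Matrix.map_apply]
    exact tendsto_finset_sum _ fun i _ => tendsto_finset_sum _ fun j _ =>
      hΨ (A i j) (ξ j) (η i)
  refine le_of_tendsto hten.norm (Filter.Eventually.of_forall fun k => ?_)
  calc ‖(inner ℂ (matOp (A.map (Φ k)) ξ) η : ℂ)‖ ≤ ‖matOp (A.map (Φ k)) ξ‖ * ‖η‖ :=
        norm_inner_le_norm _ _
    _ ≤ (‖matOp (A.map (Φ k))‖ * ‖ξ‖) * ‖η‖ :=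
        mul_le_mul_of_nonneg_right ((matOp _).le_opNorm ξ) (norm_nonneg η)
    _ ≤ ‖matOp A‖ * ‖ξ‖ * ‖η‖ := by
        have := h k n A
        gcongr

end wotprops

/-! ### Cesàro means -/

noncomputable def cesaro (φ : (H →L[ℂ] H) →ₗ[ℂ] (H →L[ℂ] H)) (n : ℕ) :
    (H →L[ℂ] H) →ₗ[ℂ] (H →L[ℂ] H) :=
  (((n : ℂ) + 1)⁻¹) • ∑ k ∈ Finset.range (n + 1), φ ^ (k + 1)

lemma pow_apply_succ (φ : (H →L[ℂ] H) →ₗ[ℂ] (H →L[ℂ] H)) (k : ℕ) (T : H →L[ℂ] H) :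
    (φ ^ (k + 1)) T = (φ ^ k) (φ T) := by
  rw [pow_succ, Module.End.mul_apply]

lemma smul_sum_norm_le {E : Type*} [NormedAddCommGroup E] [NormedSpace ℂ E] (n : ℕ)
    (f : ℕ → E) (M : ℝ) (hf : ∀ k ∈ Finset.range (n + 1), ‖f k‖ ≤ M) :
    ‖(((n : ℂ) + 1)⁻¹) • ∑ k ∈ Finset.range (n + 1), f k‖ ≤ M := by
  have hM : 0 ≤ M := le_trans (norm_nonneg (f 0)) (hf 0 (by simp))
  rw [norm_smul, norm_inv]
  have hn : ‖(n : ℂ) + 1‖ = (n : ℝ) + 1 := by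
    rw [show ((n : ℂ) + 1) = ((n + 1 : ℕ) : ℂ) by push_cast; ring, Complex.norm_natCast]
    push_cast; ring
  rw [hn]
  have h1 : ‖∑ k ∈ Finset.range (n + 1), f k‖ ≤ ((n : ℝ) + 1) * M := by
    refine (norm_sum_le _ _).trans ?_
    calc ∑ k ∈ Finset.range (n + 1), ‖f k‖ ≤ ∑ _k ∈ Finset.range (n + 1), M :=
          Finset.sum_le_sum hf
      _ = ((n : ℝ) + 1) * M := by
          rw [Finset.sum_const, Finset.card_range, nsmul_eq_mul]; push_cast; ring
  calc ((n : ℝ) + 1)⁻¹ * ‖∑ k ∈ Finset.range (n + 1), f k‖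
      ≤ ((n : ℝ) + 1)⁻¹ * (((n : ℝ) + 1) * M) := by
        have hpos : (0:ℝ) < (n : ℝ) + 1 := by positivity
        exact mul_le_mul_of_nonneg_left h1 (by positivity)
    _ = M := by field_simp

lemma cesaro_package {V : Set (H →L[ℂ] H)} {φ : (H →L[ℂ] H) →ₗ[ℂ] (H →L[ℂ] H)}
    (hφ : IsSMap V φ) :
    ∃ C : (H →L[ℂ] H) →ₗ[ℂ] (H →L[ℂ] H), IsSMap V C ∧ (∀ T, C (φ T) = C T) ∧
      (∀ T, ‖C T‖ ≤ ‖φ T‖) ∧ (∀ T T', φ T = φ T' → C T = C T') := by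
  have hcontr1 : ∀ T, ‖φ T‖ ≤ ‖T‖ := hφ.1.norm_le
  have hpowcontr : ∀ k (T : H →L[ℂ] H), ‖(φ ^ k) T‖ ≤ ‖T‖ := by
    intro k
    induction k with
    | zero => intro T; simp
    | succ k ih => intro T; rw [pow_apply_succ]; exact (ih (φ T)).trans (hcontr1 T)
  have hcesapp : ∀ n (T : H →L[ℂ] H),
      cesaro φ n T = (((n : ℂ) + 1)⁻¹) • ∑ k ∈ Finset.range (n + 1), (φ ^ (k + 1)) T := by
    intro n T
    simp [cesaro, LinearMap.sum_apply]
  have hcescontr : ∀ n (T : H →L[ℂ] H), ‖cesaro φ n T‖ ≤ ‖T‖ := by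
    intro n T
    rw [hcesapp]
    exact smul_sum_norm_le n _ ‖T‖ (fun k _ => hpowcontr (k + 1) T)
  have hcesphi : ∀ n (T : H →L[ℂ] H), ‖cesaro φ n T‖ ≤ ‖φ T‖ := by
    intro n T
    rw [hcesapp]
    refine smul_sum_norm_le n _ ‖φ T‖ (fun k _ => ?_)
    rw [pow_apply_succ]
    exact hpowcontr k (φ T)
  have hfullpow : ∀ k, FullCC (φ ^ (k + 1)) := by
    intro k
    induction k with
    | zero => simpa [pow_one] using hφ.1
    | succ k ih =>
        rw [pow_succ, Module.End.mul_eq_comp]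
        exact FullCC.comp ih hφ.1
  have hfullces : ∀ n, FullCC (cesaro φ n) := by
    intro n m A
    have hmap : A.map (cesaro φ n)
        = (((n : ℂ) + 1)⁻¹) • ∑ k ∈ Finset.range (n + 1), A.map (φ ^ (k + 1)) := by
      ext i j
      simp [cesaro, Matrix.map_apply, Matrix.smul_apply, Matrix.sum_apply,
        LinearMap.sum_apply]
    rw [hmap, matOp_smul, matOp_sum]
    exact smul_sum_norm_le n (fun k => matOp (A.map (φ ^ (k + 1)))) ‖matOp A‖ (fun k _ => hfullpow k m A)
  have hfixces : ∀ n, ∀ s ∈ V, cesaro φ n s = s := by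
    intro n s hs
    have hp : ∀ k, (φ ^ (k + 1)) s = s := by
      intro k
      induction k with
      | zero => simpa [pow_one] using hφ.2 s hs
      | succ k ih => rw [pow_apply_succ, hφ.2 s hs]; exact ih
    rw [hcesapp, Finset.sum_congr rfl (fun k _ => hp k), Finset.sum_const, Finset.card_range,
      ← Nat.cast_smul_eq_nsmul ℂ, smul_smul]
    rw [show (((n : ℂ) + 1)⁻¹ * ((n + 1 : ℕ) : ℂ)) = 1 by
      have hnz : ((n : ℂ) + 1) ≠ 0 := Nat.cast_add_one_ne_zero n
      push_cast
      exact inv_mul_cancel₀ hnz]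
    rw [one_smul]
  set U := Ultrafilter.of (atTop : Filter ℕ) with hU
  obtain ⟨C, hC⟩ := exists_wotLim U (cesaro φ) hcescontr
  have hUle : (U : Filter ℕ) ≤ atTop := Ultrafilter.of_le _
  have htel : ∀ n (T : H →L[ℂ] H), cesaro φ n (φ T) - cesaro φ n T
      = (((n : ℂ) + 1)⁻¹) • ((φ ^ (n + 2)) T - (φ ^ 1) T) := by
    intro n T
    rw [hcesapp, hcesapp, ← smul_sub, ← Finset.sum_sub_distrib]
    congr 1
    have hterm : ∀ k, (φ ^ (k + 1)) (φ T) - (φ ^ (k + 1)) T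
        = (fun k => (φ ^ (k + 1)) T) (k + 1) - (fun k => (φ ^ (k + 1)) T) k := by
      intro k
      simp only
      rw [pow_apply_succ φ (k + 1) T]
    rw [Finset.sum_congr rfl (fun k _ => hterm k),
      Finset.sum_range_sub (fun k => (φ ^ (k + 1)) T)]
  have habs : ∀ T, C (φ T) = C T := by
    intro T
    have hz : C (φ T - T) = 0 := by
      refine wot_zero hC ?_
      refine Tendsto.mono_left ?_ hUle
      refine squeeze_zero_norm (a := fun n : ℕ => ((n : ℝ) + 1)⁻¹ * (2 * ‖T‖))
        (fun n => ?_) ?_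
      · rw [norm_norm, map_sub, htel, norm_smul, norm_inv,
          show ((n : ℂ) + 1) = ((n + 1 : ℕ) : ℂ) by push_cast; ring, Complex.norm_natCast]
        have hb : ‖(φ ^ (n + 2)) T - (φ ^ 1) T‖ ≤ 2 * ‖T‖ := by
          refine (norm_sub_le _ _).trans ?_
          have := hpowcontr (n + 2) T
          have := hpowcontr 1 T
          linarith
        push_cast
        exact mul_le_mul_of_nonneg_left hb (by positivity)
      · have h0 : Tendsto (fun n : ℕ => ((n : ℝ) + 1)⁻¹) atTop (𝓝 0) := by
          simpa [one_div] using (tendsto_one_div_add_atTop_nhds_zero_nat : Tendsto (fun n : ℕ => 1 / ((n : ℝ) + 1)) atTop (𝓝 0))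
        simpa using h0.mul_const (2 * ‖T‖)
    rw [map_sub, sub_eq_zero] at hz
    exact hz
  refine ⟨C, ⟨wot_fullCC hC hfullces, fun s hs => wot_apply_eq hC (fun n => hfixces n s hs)⟩,
    habs, fun T => wot_norm_le hC (norm_nonneg _)
      (Filter.Eventually.of_forall (fun n => hcesphi n T)), fun T T' hTT' => ?_⟩
  refine wot_congr hC (fun n => ?_)
  rw [hcesapp, hcesapp]
  congr 1
  refine Finset.sum_congr rfl (fun k _ => ?_)
  rw [pow_apply_succ, pow_apply_succ, hTT']

/-! ### Existence of absorbing minimal projections -/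

lemma exists_minimal_absorbing (V : Set (H →L[ℂ] H)) (φ₀ : (H →L[ℂ] H) →ₗ[ℂ] (H →L[ℂ] H))
    (hφ₀ : IsSMap V φ₀) :
    ∃ G, IsMinimalSProj V G ∧ ∀ T, G (φ₀ T) = G T := by
  classical
  set P : ((H →L[ℂ] H) →ₗ[ℂ] (H →L[ℂ] H)) → Prop :=
    fun ψ => IsSMap V ψ ∧ ∀ T, ψ (φ₀ T) = ψ T with hP
  obtain ⟨C, hCsm, hCabs, _, _⟩ := cesaro_package hφ₀
  have hPC : P C := ⟨hCsm, hCabs⟩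
  set α := {ψ : (H →L[ℂ] H) →ₗ[ℂ] (H →L[ℂ] H) // P ψ} with hα
  haveI : Nonempty α := ⟨⟨C, hPC⟩⟩
  set r : α → α → Prop := fun a b => ∀ T, ‖b.1 T‖ ≤ ‖a.1 T‖ with hr
  have htrans : ∀ {a b c : α}, r a b → r b c → r a c :=
    fun hab hbc T => (hbc T).trans (hab T)
  have hchains : ∀ c : Set α, IsChain r c → ∃ ub, ∀ a ∈ c, r a ub := by
    intro c hchain
    by_cases hne : c.Nonempty
    · haveI : Nonempty ↥c := hne.to_subtype
      set s : ↥c → Set ↥c := fun a => {b | ∀ T, ‖(b : α).1 T‖ ≤ ‖(a : α).1 T‖} with hs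
      have hsne : ∀ a, (s a).Nonempty := fun a => ⟨a, fun T => le_refl _⟩
      have hdir : Directed (· ≥ ·) (fun a => Filter.principal (s a)) := by
        intro a b
        rcases eq_or_ne a b with rfl | hab
        · exact ⟨a, le_refl _, le_refl _⟩
        · have hne' : (a : α) ≠ (b : α) := fun h => hab (Subtype.ext h)
          rcases hchain a.2 b.2 hne' with hab' | hba'
          · exact ⟨b, Filter.principal_mono.2 (fun x hx T => (hx T).trans (hab' T)),
              le_refl _⟩
          · exact ⟨a, le_refl _,
              Filter.principal_mono.2 (fun x hx T => (hx T).trans (hba' T))⟩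
      set F := ⨅ a, Filter.principal (s a) with hF
      haveI : F.NeBot :=
        iInf_neBot_of_directed hdir (fun a => Filter.principal_neBot_iff.mpr (hsne a))
      set U := Ultrafilter.of F with hUdef
      have hUs : ∀ a : ↥c, s a ∈ U := by
        intro a
        exact Filter.le_principal_iff.mp ((Ultrafilter.of_le F).trans (iInf_le _ a))
      set Φ : ↥c → ((H →L[ℂ] H) →ₗ[ℂ] (H →L[ℂ] H)) := fun b => (b : α).1 with hΦ
      have hcontr : ∀ b T, ‖Φ b T‖ ≤ ‖T‖ := fun b T => ((b : α).2.1.1).norm_le T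
      obtain ⟨Ψ, hΨ⟩ := exists_wotLim U Φ hcontr
      have hPΨ : P Ψ :=
        ⟨⟨wot_fullCC hΨ (fun b => (b : α).2.1.1),
          fun t ht => wot_apply_eq hΨ (fun b => (b : α).2.1.2 t ht)⟩,
          fun T => wot_congr hΨ (fun b => (b : α).2.2 T)⟩
      refine ⟨⟨Ψ, hPΨ⟩, fun a ha T => ?_⟩
      exact wot_norm_le hΨ (norm_nonneg _)
        (Filter.eventually_of_mem (hUs ⟨a, ha⟩) (fun b hb => hb T))
    · exact ⟨⟨C, hPC⟩, fun a ha => absurd ⟨a, ha⟩ hne⟩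
  obtain ⟨m, hm⟩ := exists_maximal_of_chains_bounded hchains htrans
  set G := m.1 with hG
  have hPG : P G := m.2
  -- idempotency
  obtain ⟨Θ, hΘsm, hΘabs, hΘle, hΘcongr⟩ := cesaro_package hPG.1
  have hPΘ : P Θ := ⟨hΘsm, fun T => hΘcongr (φ₀ T) T (hPG.2 T)⟩
  have hGleΘ : ∀ T, ‖G T‖ ≤ ‖Θ T‖ := hm ⟨Θ, hPΘ⟩ (fun T => hΘle T)
  have hidem : ∀ T, G (G T) = G T := by
    intro T
    have h1 : Θ (T - G T) = 0 := by
      rw [map_sub, hΘabs T, sub_self]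
    have h2 : ‖G (T - G T)‖ ≤ ‖Θ (T - G T)‖ := hGleΘ _
    rw [h1, norm_zero] at h2
    have h3 : G (T - G T) = 0 := norm_le_zero_iff.mp h2
    rw [map_sub, sub_eq_zero] at h3
    exact h3.symm
  -- global minimality
  have hminimal : ∀ ψ, IsSMap V ψ → (∀ T, ‖ψ T‖ ≤ ‖G T‖) → ∀ T, ‖ψ T‖ = ‖G T‖ := by
    intro ψ hψsm hle
    set χ := ψ ∘ₗ G with hχ
    have hPχ : P χ := ⟨hψsm.comp hPG.1, fun T => by
      simp only [hχ, LinearMap.comp_apply, hPG.2 T]⟩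
    have hrmχ : r m ⟨χ, hPχ⟩ := fun T => hψsm.1.norm_le (G T)
    have hGleχ : ∀ T, ‖G T‖ ≤ ‖ψ (G T)‖ := hm ⟨χ, hPχ⟩ hrmχ
    intro T
    have hfix : ψ T = ψ (G T) := by
      have h4 : ‖ψ (T - G T)‖ ≤ ‖G (T - G T)‖ := hle _
      have h5 : G (T - G T) = 0 := by rw [map_sub, hidem T, sub_self]
      rw [h5, norm_zero] at h4
      have h6 : ψ (T - G T) = 0 := norm_le_zero_iff.mp h4
      rw [map_sub, sub_eq_zero] at h6
      exact h6
    refine le_antisymm (hle T) ?_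
    rw [hfix]
    exact hGleχ T
  exact ⟨G, ⟨hPG.1, LinearMap.ext hidem, hminimal⟩, hPG.2⟩

end Aux

/-- For a linear subspace `V ⊆ B(H)`, the set of minimal
`V`-projections on `B(H)` is nonempty, and the fixed space
`F(V) = {T : φ T = T for every V-map φ}` equals both the set of operators fixed by all
minimal `V`-projections and the intersection of the ranges of all minimal
`V`-projections. -/
theorem stmt_14 (V : Submodule ℂ (H →L[ℂ] H)) :
    {E : (H →L[ℂ] H) →ₗ[ℂ] (H →L[ℂ] H) | IsMinimalSProj (V : Set (H →L[ℂ] H)) E}.Nonempty ∧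
    {T : H →L[ℂ] H | ∀ φ : (H →L[ℂ] H) →ₗ[ℂ] (H →L[ℂ] H),
        IsSMap (V : Set (H →L[ℂ] H)) φ → φ T = T} =
      {T : H →L[ℂ] H | ∀ E : (H →L[ℂ] H) →ₗ[ℂ] (H →L[ℂ] H),
        IsMinimalSProj (V : Set (H →L[ℂ] H)) E → E T = T} ∧
    {T : H →L[ℂ] H | ∀ φ : (H →L[ℂ] H) →ₗ[ℂ] (H →L[ℂ] H),
        IsSMap (V : Set (H →L[ℂ] H)) φ → φ T = T} =
      ⋂ E ∈ {E : (H →L[ℂ] H) →ₗ[ℂ] (H →L[ℂ] H) |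
        IsMinimalSProj (V : Set (H →L[ℂ] H)) E}, Set.range ⇑E := by
  -- the key step: operators fixed by all minimal projections are fixed by all S-maps
  have hmain : ∀ T : H →L[ℂ] H,
      (∀ E, IsMinimalSProj (V : Set (H →L[ℂ] H)) E → E T = T) →
      ∀ φ, IsSMap (V : Set (H →L[ℂ] H)) φ → φ T = T := by
    intro T hT φ hφ
    obtain ⟨G, hG, habs⟩ := exists_minimal_absorbing (V : Set (H →L[ℂ] H)) φ hφ
    have hGT : G T = T := hT G hG
    set h := φ ∘ₗ G with hh
    have hGidem : ∀ T', G (G T') = G T' := fun T' => LinearMap.ext_iff.mp hG.2.1 T'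
    have hidem : h ∘ₗ h = h := by
      refine LinearMap.ext fun T' => ?_
      simp only [hh, LinearMap.comp_apply]
      rw [habs (G T'), hGidem T']
    have hSMap : IsSMap (V : Set (H →L[ℂ] H)) h := hφ.comp hG.1
    have hle : ∀ T', ‖h T'‖ ≤ ‖G T'‖ := fun T' => hφ.1.norm_le (G T')
    have hheq : ∀ T', ‖h T'‖ = ‖G T'‖ := hG.2.2 h hSMap hle
    have hmin : IsMinimalSProj (V : Set (H →L[ℂ] H)) h := by
      refine ⟨hSMap, hidem, fun ψ hψ hψle => ?_⟩
      have h1 : ∀ T', ‖ψ T'‖ ≤ ‖G T'‖ := fun T' => (hψle T').trans (hle T')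
      intro T'
      rw [hG.2.2 ψ hψ h1 T', hheq T']
    have hfinal : h T = T := hT h hmin
    rw [hh] at hfinal
    simp only [LinearMap.comp_apply, hGT] at hfinal
    exact hfinal
  obtain ⟨G₀, hG₀, _⟩ := exists_minimal_absorbing (V : Set (H →L[ℂ] H)) LinearMap.id IsSMap.id'
  refine ⟨⟨G₀, hG₀⟩, ?_, ?_⟩
  · ext T
    simp only [Set.mem_setOf_eq]
    constructor
    · intro hT E hE
      exact hT E hE.1
    · intro hT φ hφ
      exact hmain T hT φ hφ
  · ext T
    simp only [Set.mem_setOf_eq, Set.mem_iInter]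
    constructor
    · intro hT E hE
      exact ⟨T, hT E hE.1⟩
    · intro hT
      refine hmain T (fun E hE => ?_)
      obtain ⟨W, hW⟩ := hT E hE
      have : E T = E (E W) := by rw [hW]
      rw [this, ← LinearMap.comp_apply, hE.2.1, hW]
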